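/- arXiv:2503.20455 — 3 statements merged into one kernel-verified Lean document; each statement's English description precedes it below -/
import Mathlib

section
/- For every real R > 0, the function F(r) = 2π·sinh(R(1+ir))/(ir(1+ir)) − 2π·sinh(R(1−ir))/(ir(1−ir)), defined for complex r ∉ {0, i, −i}, tends to the value 4π·(R·cosh(R) − sinh(R)) as r → 0. -/
open Complex Filter Topology

/-- For `R > 0`, the closed-form Selberg transform
`F(r) = 2π sinh(R(1+ir))/(ir(1+ir)) − 2π sinh(R(1−ir))/(ir(1−ir))`, defined for
`r ∉ {0, i, −i}`, tends to `4π (R cosh R − sinh R)` as `r → 0`. -/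
theorem selberg_transform_limit_at_zero (R : ℝ) (hR : 0 < R) :
    Filter.Tendsto
      (fun r : ℂ =>
        2 * (Real.pi : ℂ) * Complex.sinh ((R : ℂ) * (1 + Complex.I * r)) /
            (Complex.I * r * (1 + Complex.I * r))
          - 2 * (Real.pi : ℂ) * Complex.sinh ((R : ℂ) * (1 - Complex.I * r)) /
            (Complex.I * r * (1 - Complex.I * r)))
      (𝓝[({0, Complex.I, -Complex.I} : Set ℂ)ᶜ] 0)
      (𝓝 ((4 * Real.pi * (R * Real.cosh R - Real.sinh R) : ℝ) : ℂ)) := by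
  -- The slope limit: sinh(R z)/z → R as z → 0 within z ≠ 0
  have hd : HasDerivAt (fun z : ℂ => Complex.sinh ((R : ℂ) * z)) (R : ℂ) 0 := by
    have h := (Complex.hasDerivAt_sinh ((R : ℂ) * 0)).comp 0
      ((hasDerivAt_id (0 : ℂ)).const_mul (R : ℂ))
    simpa [Function.comp_def] using h
  rw [hasDerivAt_iff_tendsto_slope] at hd
  have hslope : Tendsto (fun z : ℂ => Complex.sinh ((R : ℂ) * z) / z)
      (𝓝[≠] (0 : ℂ)) (𝓝 (R : ℂ)) := by
    refine hd.congr' ?_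
    filter_upwards [self_mem_nhdsWithin] with z hz
    simp [slope_def_field]
  -- map r ↦ I * r from 𝓝[≠]0 to 𝓝[≠]0
  have hmap : Tendsto (fun r : ℂ => Complex.I * r) (𝓝[≠] (0 : ℂ)) (𝓝[≠] (0 : ℂ)) := by
    rw [tendsto_nhdsWithin_iff]
    constructor
    · have : Tendsto (fun r : ℂ => Complex.I * r) (𝓝 0) (𝓝 (Complex.I * 0)) :=
        (continuous_const.mul continuous_id).tendsto 0
      simpa using this.mono_left nhdsWithin_le_nhds
    · filter_upwards [self_mem_nhdsWithin] with r hr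
      simp only [Set.mem_compl_iff, Set.mem_singleton_iff] at hr ⊢
      exact mul_ne_zero Complex.I_ne_zero hr
  have h1 : Tendsto (fun r : ℂ => Complex.sinh ((R : ℂ) * (Complex.I * r)) / (Complex.I * r))
      (𝓝[≠] (0 : ℂ)) (𝓝 (R : ℂ)) := hslope.comp hmap
  -- cosh(R * (I r)) → 1
  have h2 : Tendsto (fun r : ℂ => Complex.cosh ((R : ℂ) * (Complex.I * r)))
      (𝓝[≠] (0 : ℂ)) (𝓝 1) := by
    have : Continuous (fun r : ℂ => Complex.cosh ((R : ℂ) * (Complex.I * r))) := by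
      continuity
    have ht := this.tendsto 0
    simp only [mul_zero, Complex.cosh_zero] at ht
    exact ht.mono_left nhdsWithin_le_nhds
  -- denominator 1 - (I r)^2 → 1
  have h3 : Tendsto (fun r : ℂ => 1 - (Complex.I * r) ^ 2) (𝓝[≠] (0 : ℂ)) (𝓝 1) := by
    have : Continuous (fun r : ℂ => 1 - (Complex.I * r) ^ 2) := by continuity
    have ht := this.tendsto 0
    simp only [mul_zero] at ht
    norm_num at ht
    exact ht.mono_left nhdsWithin_le_nhds
  -- the regularized function G
  have hG : Tendsto (fun r : ℂ =>
      2 * (Real.pi : ℂ) *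
        (2 * Complex.cosh (R : ℂ) * (Complex.sinh ((R : ℂ) * (Complex.I * r)) / (Complex.I * r))
          - 2 * Complex.sinh (R : ℂ) * Complex.cosh ((R : ℂ) * (Complex.I * r))) /
        (1 - (Complex.I * r) ^ 2))
      (𝓝[≠] (0 : ℂ))
      (𝓝 ((4 * Real.pi * (R * Real.cosh R - Real.sinh R) : ℝ) : ℂ)) := by
    have ha : Tendsto (fun r : ℂ =>
        2 * Complex.cosh (R : ℂ) * (Complex.sinh ((R : ℂ) * (Complex.I * r)) / (Complex.I * r))
          - 2 * Complex.sinh (R : ℂ) * Complex.cosh ((R : ℂ) * (Complex.I * r)))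
        (𝓝[≠] (0 : ℂ))
        (𝓝 (2 * Complex.cosh (R : ℂ) * (R : ℂ) - 2 * Complex.sinh (R : ℂ) * 1)) :=
      ((tendsto_const_nhds.mul h1).sub (tendsto_const_nhds.mul h2))
    have hb := (tendsto_const_nhds (x := (2 * (Real.pi : ℂ))) (f := 𝓝[≠] (0:ℂ))).mul ha
    have hc := hb.div h3 one_ne_zero
    convert hc using 2
    · exact rfl
    push_cast [Complex.ofReal_cosh, Complex.ofReal_sinh]
    ring
  -- restrict to the smaller set
  have hsub : (𝓝[({0, Complex.I, -Complex.I} : Set ℂ)ᶜ] (0:ℂ)) ≤ 𝓝[≠] (0:ℂ) := by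
    apply nhdsWithin_mono
    intro r hr
    simp only [Set.mem_compl_iff, Set.mem_insert_iff, Set.mem_singleton_iff] at hr
    simp only [Set.mem_compl_iff, Set.mem_singleton_iff]
    tauto
  refine (hG.mono_left hsub).congr' ?_
  filter_upwards [self_mem_nhdsWithin] with r hr
  simp only [Set.mem_compl_iff, Set.mem_insert_iff, Set.mem_singleton_iff] at hr
  push_neg at hr
  obtain ⟨hr0, hrI, hrI'⟩ := hr
  have hIr : Complex.I * r ≠ 0 := mul_ne_zero Complex.I_ne_zero hr0
  have hp : 1 + Complex.I * r ≠ 0 := by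
    intro h
    exact hrI (by linear_combination (-Complex.I) * h + r * Complex.I_mul_I)
  have hm : 1 - Complex.I * r ≠ 0 := by
    intro h
    exact hrI' (by linear_combination Complex.I * h + r * Complex.I_mul_I)
  have key1 : Complex.sinh ((R : ℂ) * (1 + Complex.I * r)) =
      Complex.sinh (R : ℂ) * Complex.cosh ((R : ℂ) * (Complex.I * r))
        + Complex.cosh (R : ℂ) * Complex.sinh ((R : ℂ) * (Complex.I * r)) := by
    rw [mul_add, mul_one, Complex.sinh_add]
  have key2 : Complex.sinh ((R : ℂ) * (1 - Complex.I * r)) =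
      Complex.sinh (R : ℂ) * Complex.cosh ((R : ℂ) * (Complex.I * r))
        - Complex.cosh (R : ℂ) * Complex.sinh ((R : ℂ) * (Complex.I * r)) := by
    rw [mul_sub, mul_one, Complex.sinh_sub]
  have hq : 1 - (Complex.I * r) ^ 2 ≠ 0 := by
    intro h
    have : (1 - Complex.I * r) * (1 + Complex.I * r) = 0 := by linear_combination h
    rcases mul_eq_zero.mp this with h' | h'
    · exact hm h'
    · exact hp h'
  rw [key1, key2]
  have hq2 : 1 - Complex.I ^ 2 * r ^ 2 ≠ 0 := by rwa [← mul_pow]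
  field_simp
  ring
end

section
/- There exists an absolute constant C > 0 such that for every real R ≥ 1, every η ∈ (0,1), every sign s ∈ {+1, −1}, and every nonzero real r, one has |h_{R+sη}(r)·h_η(r)/(π(sinh(2η) − 2η))| ≤ C·R·e^R·min{1, 1/r², 1/(r⁴·η²)}. -/
open MeasureTheory

/-- The Selberg transform of the indicator of a hyperbolic ball of radius `ρ` in `ℍ³`,
as a function of a real spectral parameter `r`. -/
noncomputable def hSel (ρ r : ℝ) : ℝ :=
  (4 * Real.pi / r) * ∫ u in (0:ℝ)..ρ, Real.sin (r * u) * Real.sinh u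

/-- The smoothed Selberg transform `h_± = h_{R+sη} · h_η / μ(B_η)`,
where `μ(B_η) = π(sinh(2η) − 2η)`. -/
noncomputable def hPM (R η s r : ℝ) : ℝ :=
  hSel (R + s * η) r * hSel η r / (Real.pi * (Real.sinh (2 * η) - 2 * η))

/-! ### Auxiliary elementary inequalities -/

lemma aux_cosh_one_lt_two : Real.cosh 1 < 2 := by
  rw [Real.cosh_eq]
  have h1 := Real.exp_one_lt_d9
  have h2 : Real.exp (-1) ≤ 1 := Real.exp_le_one_iff.2 (by norm_num)
  nlinarith

lemma aux_cosh_lower (x : ℝ) : 1 + x^2/2 ≤ Real.cosh x := by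
  have h : Real.cosh x = 1 + 2 * Real.sinh (x/2)^2 := by
    have h1 := Real.cosh_sq (x/2)
    have h2 := Real.cosh_two_mul (x/2)
    rw [show x = 2 * (x/2) by ring, h2, h1]; ring
  rw [h]
  have : |x/2| ≤ |Real.sinh (x/2)| := by
    rw [Real.abs_sinh]
    have := Real.self_le_sinh_iff.2 (abs_nonneg (x/2))
    linarith
  nlinarith [sq_abs (x/2), sq_abs (Real.sinh (x/2)),
    sq_le_sq' (by linarith [neg_abs_le (x/2), le_abs_self (x/2)] :
      -(|Real.sinh (x/2)|) ≤ x/2) (le_trans (le_abs_self _) this)]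

lemma aux_sinh_cubic_lower {x : ℝ} (hx : 0 ≤ x) : x + x^3/6 ≤ Real.sinh x := by
  have hd : ∀ t : ℝ, HasDerivAt (fun t => Real.sinh t - t - t^3/6)
      (Real.cosh t - 1 - t^2/2) t := by
    intro t
    have := ((Real.hasDerivAt_sinh t).sub (hasDerivAt_id t)).sub
      (((hasDerivAt_pow 3 t)).div_const 6)
    refine this.congr_deriv ?_
    push_cast; ring
  have hi : Real.sinh x - x - x^3/6 = ∫ t in (0:ℝ)..x, (Real.cosh t - 1 - t^2/2) := by
    rw [intervalIntegral.integral_eq_sub_of_hasDerivAt (fun t _ => hd t)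
      (Continuous.intervalIntegrable (by continuity) 0 x)]
    simp
  have hnn : 0 ≤ Real.sinh x - x - x^3/6 := by
    rw [hi]
    apply intervalIntegral.integral_nonneg hx
    intro t _
    have := aux_cosh_lower t
    linarith
  linarith

lemma aux_sinh_le_two_mul {u : ℝ} (h0 : 0 ≤ u) (h1 : u ≤ 1) : Real.sinh u ≤ 2 * u := by
  have hd : ∀ t : ℝ, HasDerivAt (fun t => 2*t - Real.sinh t) (2 - Real.cosh t) t := by
    intro t
    exact (((hasDerivAt_id t).const_mul 2).sub (Real.hasDerivAt_sinh t)).congr_deriv (by ring)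
  have hi : 2*u - Real.sinh u = ∫ t in (0:ℝ)..u, (2 - Real.cosh t) := by
    rw [intervalIntegral.integral_eq_sub_of_hasDerivAt (fun t _ => hd t)
      (Continuous.intervalIntegrable (by continuity) 0 u)]
    simp
  have hnn : 0 ≤ 2*u - Real.sinh u := by
    rw [hi]
    apply intervalIntegral.integral_nonneg h0
    intro t ht
    simp only [Set.mem_Icc] at ht
    have : Real.cosh t ≤ Real.cosh 1 := by
      rw [Real.cosh_le_cosh, abs_of_nonneg ht.1, abs_one]
      linarith
    linarith [aux_cosh_one_lt_two]
  linarith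

lemma aux_cosh_le_exp {x : ℝ} (hx : 0 ≤ x) : Real.cosh x ≤ Real.exp x := by
  rw [Real.cosh_eq]
  have : Real.exp (-x) ≤ Real.exp x := Real.exp_le_exp.2 (by linarith)
  linarith

lemma aux_sinh_le_exp {x : ℝ} (hx : 0 ≤ x) : Real.sinh x ≤ Real.exp x := by
  have := Real.sinh_lt_cosh x
  linarith [aux_cosh_le_exp hx, abs_le.1 (le_refl |Real.sinh x|)]

/-! ### Closed form and bounds for `hSel` -/

lemma aux_hasDeriv (r u : ℝ) : HasDerivAt
    (fun u => (Real.sin (r*u) * Real.cosh u - r * Real.cos (r*u) * Real.sinh u) / (1+r^2))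
    (Real.sin (r*u) * Real.sinh u) u := by
  have hid : HasDerivAt (fun u : ℝ => r * u) r u := by
    simpa using (hasDerivAt_id u).const_mul r
  have hN := (hid.sin.mul (Real.hasDerivAt_cosh u)).sub
    ((hid.cos.const_mul r).mul (Real.hasDerivAt_sinh u))
  have hr : (1:ℝ) + r^2 ≠ 0 := by positivity
  refine (hN.div_const (1+r^2)).congr_deriv ?_
  field_simp
  ring

lemma integral_sin_mul_sinh (r ρ : ℝ) :
    ∫ u in (0:ℝ)..ρ, Real.sin (r*u) * Real.sinh u
      = (Real.sin (r*ρ) * Real.cosh ρ - r * Real.cos (r*ρ) * Real.sinh ρ) / (1+r^2) := by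
  rw [intervalIntegral.integral_eq_sub_of_hasDerivAt (fun u _ => aux_hasDeriv r u)
    (Continuous.intervalIntegrable (by continuity) 0 ρ)]
  simp

lemma N_tri (ρ r : ℝ) (hρ : 0 ≤ ρ) :
    |Real.sin (r*ρ) * Real.cosh ρ - r * Real.cos (r*ρ) * Real.sinh ρ|
      ≤ |Real.sin (r*ρ)| * Real.cosh ρ + |r| * |Real.cos (r*ρ)| * Real.sinh ρ := by
  calc |Real.sin (r*ρ) * Real.cosh ρ - r * Real.cos (r*ρ) * Real.sinh ρ|
      ≤ |Real.sin (r*ρ) * Real.cosh ρ| + |r * Real.cos (r*ρ) * Real.sinh ρ| := abs_sub _ _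
    _ = |Real.sin (r*ρ)| * Real.cosh ρ + |r| * |Real.cos (r*ρ)| * Real.sinh ρ := by
        rw [abs_mul, abs_mul, abs_mul, abs_of_pos (Real.cosh_pos ρ),
          abs_of_nonneg (Real.sinh_nonneg_iff.2 hρ)]

lemma abs_sin_le_mul {r ρ : ℝ} (hρ : 0 ≤ ρ) : |Real.sin (r*ρ)| ≤ |r| * ρ := by
  calc |Real.sin (r*ρ)| ≤ |r*ρ| := Real.abs_sin_le_abs
    _ = |r| * ρ := by rw [abs_mul, abs_of_nonneg hρ]

lemma hSel_abs_le {ρ r M : ℝ} (hr : r ≠ 0) (_hM : 0 ≤ M)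
    (hN : |Real.sin (r*ρ) * Real.cosh ρ - r * Real.cos (r*ρ) * Real.sinh ρ| ≤ |r| * M) :
    |hSel ρ r| ≤ 4 * Real.pi * M / (1+r^2) := by
  have hr' : (0:ℝ) < |r| := abs_pos.2 hr
  have h12 : (0:ℝ) < 1 + r^2 := by positivity
  rw [hSel, integral_sin_mul_sinh, abs_mul, abs_div, abs_div,
    abs_of_nonneg (by positivity : (0:ℝ) ≤ 4*Real.pi), abs_of_pos h12]
  calc 4*Real.pi/|r| * (|Real.sin (r*ρ) * Real.cosh ρ - r * Real.cos (r*ρ) * Real.sinh ρ|/(1+r^2))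
      ≤ 4*Real.pi/|r| * ((|r| * M)/(1+r^2)) := by gcongr
    _ = 4*Real.pi*M/(1+r^2) := by field_simp

lemma hSel_bound_main {ρ r : ℝ} (hr : r ≠ 0) (hρ : 0 ≤ ρ) :
    |hSel ρ r| ≤ 4 * Real.pi * ((ρ+1) * Real.exp ρ) / (1+r^2) := by
  refine hSel_abs_le hr (by positivity) (le_trans (N_tri ρ r hρ) ?_)
  have h1 := abs_sin_le_mul (r := r) hρ
  have h2 : Real.cosh ρ ≤ Real.exp ρ := aux_cosh_le_exp hρ
  have h3 : Real.sinh ρ ≤ Real.exp ρ := aux_sinh_le_exp hρ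
  have h4 : |Real.cos (r*ρ)| ≤ 1 := Real.abs_cos_le_one _
  have h5 : 0 ≤ Real.sinh ρ := Real.sinh_nonneg_iff.2 hρ
  have t1 : |Real.sin (r*ρ)| * Real.cosh ρ ≤ (|r| * ρ) * Real.exp ρ :=
    mul_le_mul h1 h2 (Real.cosh_pos ρ).le (by positivity)
  have t2 : |r| * |Real.cos (r*ρ)| * Real.sinh ρ ≤ (|r| * 1) * Real.exp ρ :=
    mul_le_mul (mul_le_mul le_rfl h4 (abs_nonneg _) (abs_nonneg _)) h3 h5 (by positivity)
  nlinarith [t1, t2]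

lemma hSel_bound_small {ρ r : ℝ} (hr : r ≠ 0) (hρ : 0 ≤ ρ) (hρ1 : ρ ≤ 1) :
    |hSel ρ r| ≤ 16 * Real.pi * ρ / (1+r^2) := by
  have key : |hSel ρ r| ≤ 4 * Real.pi * (4 * ρ) / (1+r^2) := by
    refine hSel_abs_le hr (by positivity) (le_trans (N_tri ρ r hρ) ?_)
    have h1 := abs_sin_le_mul (r := r) hρ
    have h2 : Real.cosh ρ ≤ 2 := by
      calc Real.cosh ρ ≤ Real.cosh 1 := by
            rw [Real.cosh_le_cosh, abs_of_nonneg hρ, abs_one]; exact hρ1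
        _ ≤ 2 := aux_cosh_one_lt_two.le
    have h3 : Real.sinh ρ ≤ 2 * ρ := aux_sinh_le_two_mul hρ hρ1
    have h4 : |Real.cos (r*ρ)| ≤ 1 := Real.abs_cos_le_one _
    have h5 : 0 ≤ Real.sinh ρ := Real.sinh_nonneg_iff.2 hρ
    have t1 : |Real.sin (r*ρ)| * Real.cosh ρ ≤ (|r| * ρ) * 2 :=
      mul_le_mul h1 h2 (Real.cosh_pos ρ).le (by positivity)
    have t2 : |r| * |Real.cos (r*ρ)| * Real.sinh ρ ≤ (|r| * 1) * (2 * ρ) :=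
      mul_le_mul (mul_le_mul le_rfl h4 (abs_nonneg _) (abs_nonneg _)) h3 h5 (by positivity)
    nlinarith [t1, t2]
  calc |hSel ρ r| ≤ 4 * Real.pi * (4 * ρ) / (1+r^2) := key
    _ = 16 * Real.pi * ρ / (1+r^2) := by ring

lemma hSel_bound_cube {ρ r : ℝ} (hr : r ≠ 0) (hρ : 0 ≤ ρ) (hρ1 : ρ ≤ 1) :
    |hSel ρ r| ≤ 3 * Real.pi * ρ^3 := by
  have hr' : (0:ℝ) < |r| := abs_pos.2 hr
  have key : |∫ u in (0:ℝ)..ρ, Real.sin (r*u) * Real.sinh u| ≤ 2 * |r| * ρ^3 / 3 := by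
    have hle : ∀ u ∈ Set.Icc (0:ℝ) ρ, |Real.sin (r*u) * Real.sinh u| ≤ 2 * |r| * u^2 := by
      intro u hu
      obtain ⟨hu0, huρ⟩ := hu
      have hu1 : u ≤ 1 := le_trans huρ hρ1
      rw [abs_mul]
      have h1 : |Real.sin (r*u)| ≤ |r| * u := abs_sin_le_mul hu0
      have h2 : |Real.sinh u| ≤ 2 * u := by
        rw [abs_of_nonneg (Real.sinh_nonneg_iff.2 hu0)]
        exact aux_sinh_le_two_mul hu0 hu1
      calc |Real.sin (r*u)| * |Real.sinh u| ≤ (|r| * u) * (2*u) :=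
            mul_le_mul h1 h2 (abs_nonneg _) (by positivity)
        _ = 2 * |r| * u^2 := by ring
    calc |∫ u in (0:ℝ)..ρ, Real.sin (r*u) * Real.sinh u|
        ≤ ∫ u in (0:ℝ)..ρ, |Real.sin (r*u) * Real.sinh u| :=
          intervalIntegral.abs_integral_le_integral_abs hρ
      _ ≤ ∫ u in (0:ℝ)..ρ, 2 * |r| * u^2 := by
          apply intervalIntegral.integral_mono_on hρ
          · exact Continuous.intervalIntegrable (by continuity) 0 ρ
          · exact Continuous.intervalIntegrable (by continuity) 0 ρ
          · exact hle
      _ = 2 * |r| * ρ^3 / 3 := by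
          rw [intervalIntegral.integral_const_mul, integral_pow]
          ring
  rw [hSel, abs_mul, abs_div, abs_of_nonneg (by positivity : (0:ℝ) ≤ 4*Real.pi)]
  calc 4*Real.pi/|r| * |∫ u in (0:ℝ)..ρ, Real.sin (r*u) * Real.sinh u|
      ≤ 4*Real.pi/|r| * (2 * |r| * ρ^3/3) := by gcongr
    _ = 8 * Real.pi * ρ^3 / 3 := by field_simp; ring
    _ ≤ 3 * Real.pi * ρ^3 := by nlinarith [Real.pi_pos, pow_nonneg hρ 3]

lemma denom_lb {η : ℝ} (h0 : 0 < η) :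
    4*Real.pi/3*η^3 ≤ Real.pi * (Real.sinh (2*η) - 2*η) := by
  have h := aux_sinh_cubic_lower (x := 2*η) (by positivity)
  have hπ := Real.pi_pos
  nlinarith [pow_pos h0 3]

lemma denom_pos {η : ℝ} (h0 : 0 < η) : 0 < Real.pi * (Real.sinh (2*η) - 2*η) := by
  have := denom_lb h0
  have hπ := Real.pi_pos
  nlinarith [pow_pos h0 3]

/-- Uniform bound `|h_±(r)| ≤ C R e^R min{1, 1/r², 1/(r⁴η²)}` for `R ≥ 1`, `η ∈ (0,1)`,
sign `s = ±1`, and nonzero real `r`. -/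
theorem hPM_min_bound :
    ∃ C : ℝ, 0 < C ∧ ∀ R : ℝ, 1 ≤ R → ∀ η : ℝ, 0 < η → η < 1 →
      ∀ s : ℝ, (s = 1 ∨ s = -1) → ∀ r : ℝ, r ≠ 0 →
        |hPM R η s r|
          ≤ C * R * Real.exp R *
              min (min 1 (1 / r ^ 2)) (1 / (r ^ 4 * η ^ 2)) := by
  refine ⟨144 * Real.pi * Real.exp 1, by positivity, ?_⟩
  intro R hR η hη0 hη1 s hs r hr
  have hπ := Real.pi_pos
  have hr2 : (0:ℝ) < 1 + r^2 := by positivity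
  have hr' : (0:ℝ) < |r| := abs_pos.2 hr
  set ρ := R + s * η with hρdef
  have hsη : |s * η| = η := by
    rcases hs with h | h <;> rw [h, abs_mul] <;>
      simp [abs_of_pos hη0, abs_of_nonneg]
  have hρ0 : 0 ≤ ρ := by
    have : -(η) ≤ s * η := by rcases hs with h | h <;> rw [h] <;> nlinarith
    simp only [hρdef]; nlinarith
  have hρub : ρ ≤ R + 1 := by
    have : s * η ≤ η := by rcases hs with h | h <;> rw [h] <;> nlinarith
    simp only [hρdef]; nlinarith
  -- Bound on the long factor
  have hA : |hSel ρ r| ≤ 12 * Real.pi * Real.exp 1 * R * Real.exp R / (1+r^2) := by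
    have h1 := hSel_bound_main (ρ := ρ) hr hρ0
    have h2 : (ρ+1) * Real.exp ρ ≤ (3*R) * (Real.exp 1 * Real.exp R) := by
      have e1 : Real.exp ρ ≤ Real.exp (R+1) := Real.exp_le_exp.2 (by linarith)
      have e2 : Real.exp (R+1) = Real.exp 1 * Real.exp R := by
        rw [← Real.exp_add]; ring_nf
      have e3 : ρ + 1 ≤ 3 * R := by linarith
      have := mul_le_mul e3 (e2 ▸ e1) (Real.exp_pos ρ).le (by linarith)
      linarith
    calc |hSel ρ r| ≤ 4 * Real.pi * ((ρ+1) * Real.exp ρ) / (1+r^2) := h1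
      _ ≤ 4 * Real.pi * ((3*R) * (Real.exp 1 * Real.exp R)) / (1+r^2) := by gcongr
      _ = 12 * Real.pi * Real.exp 1 * R * Real.exp R / (1+r^2) := by ring
  -- Bounds on the short factor
  have hB3 : |hSel η r| ≤ 3 * Real.pi * η^3 := hSel_bound_cube hr hη0.le hη1.le
  have hB2 : |hSel η r| ≤ 16 * Real.pi * η / (1+r^2) := hSel_bound_small hr hη0.le hη1.le
  have hD : 4*Real.pi/3*η^3 ≤ Real.pi * (Real.sinh (2*η) - 2*η) := denom_lb hη0
  have hDpos := denom_pos hη0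
  have hXeq : |hPM R η s r|
      = |hSel ρ r| * |hSel η r| / (Real.pi * (Real.sinh (2*η) - 2*η)) := by
    rw [hPM, abs_div, abs_mul, abs_of_pos hDpos]
  have hP : (0:ℝ) < Real.pi * Real.exp 1 * R * Real.exp R := by
    have h1 := Real.exp_pos R
    have h2 := Real.exp_pos 1
    positivity
  set K := 144 * Real.pi * Real.exp 1 * R * Real.exp R with hK
  have hKpos : 0 < K := by
    have := Real.exp_pos R
    have := Real.exp_pos 1
    positivity
  -- bound 1 : |hPM| ≤ K
  have g1 : |hPM R η s r| ≤ K := by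
    rw [hXeq]
    calc |hSel ρ r| * |hSel η r| / (Real.pi * (Real.sinh (2*η) - 2*η))
        ≤ (12 * Real.pi * Real.exp 1 * R * Real.exp R / (1+r^2) * (3 * Real.pi * η^3))
            / (4*Real.pi/3*η^3) :=
          div_le_div₀ (by positivity)
            (mul_le_mul hA hB3 (abs_nonneg _) (by positivity)) (by positivity) hD
      _ = 27 * Real.pi * Real.exp 1 * R * Real.exp R / (1+r^2) := by
          field_simp; ring
      _ ≤ K := by
          rw [hK, div_le_iff₀ hr2]
          nlinarith [hP, mul_nonneg hP.le (sq_nonneg r)]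
  -- bound 2 : |hPM| ≤ K / r²
  have g2 : |hPM R η s r| ≤ K * (1 / r^2) := by
    rw [hXeq]
    have hrr : (0:ℝ) < r^2 := by positivity
    calc |hSel ρ r| * |hSel η r| / (Real.pi * (Real.sinh (2*η) - 2*η))
        ≤ (12 * Real.pi * Real.exp 1 * R * Real.exp R / (1+r^2) * (3 * Real.pi * η^3))
            / (4*Real.pi/3*η^3) :=
          div_le_div₀ (by positivity)
            (mul_le_mul hA hB3 (abs_nonneg _) (by positivity)) (by positivity) hD
      _ = 27 * Real.pi * Real.exp 1 * R * Real.exp R / (1+r^2) := by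
          field_simp; ring
      _ ≤ K * (1 / r^2) := by
          rw [hK, mul_one_div, div_le_div_iff₀ hr2 hrr]
          nlinarith [hP, mul_nonneg hP.le (sq_nonneg r)]
  -- bound 3 : |hPM| ≤ K / (r⁴ η²)
  have g3 : |hPM R η s r| ≤ K * (1 / (r^4 * η^2)) := by
    rw [hXeq]
    have hr4 : (0:ℝ) < r^4 * η^2 := by positivity
    calc |hSel ρ r| * |hSel η r| / (Real.pi * (Real.sinh (2*η) - 2*η))
        ≤ (12 * Real.pi * Real.exp 1 * R * Real.exp R / (1+r^2)
            * (16 * Real.pi * η / (1+r^2)))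
            / (4*Real.pi/3*η^3) :=
          div_le_div₀ (by positivity)
            (mul_le_mul hA hB2 (abs_nonneg _) (by positivity)) (by positivity) hD
      _ = 144 * Real.pi * Real.exp 1 * R * Real.exp R / ((1+r^2)^2 * η^2) := by
          field_simp; ring
      _ ≤ K * (1 / (r^4 * η^2)) := by
          rw [hK, mul_one_div, div_le_div_iff₀ (by positivity) hr4]
          have h2 : r^4 * η^2 ≤ (1+r^2)^2 * η^2 := by nlinarith [sq_nonneg (r*η), sq_nonneg η]
          exact mul_le_mul_of_nonneg_left h2 (by positivity)
  -- combine
  have hfinal : |hPM R η s r| ≤ min (min (K * 1) (K * (1/r^2))) (K * (1/(r^4*η^2))) :=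
    le_min (le_min (by simpa using g1) g2) g3
  calc |hPM R η s r| ≤ min (min (K * 1) (K * (1/r^2))) (K * (1/(r^4*η^2))) := hfinal
    _ = K * min (min 1 (1/r^2)) (1/(r^4*η^2)) := by
        rw [mul_min_of_nonneg _ _ hKpos.le, mul_min_of_nonneg _ _ hKpos.le]
    _ = 144 * Real.pi * Real.exp 1 * R * Real.exp R
          * min (min 1 (1/r^2)) (1/(r^4*η^2)) := by rw [hK]
end

section
/- For every real R > 0, there exists an entire function g : ℂ → ℂ such that g(r) = 2π·sinh(R(1+ir))/(ir(1+ir)) − 2π·sinh(R(1−ir))/(ir(1−ir)) for all complex r ∉ {0, i, −i}; moreover g(0) = 4π(R·cosh(R) − sinh(R)) and g(i) = g(−i) = π(sinh(2R) − 2R). -/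
open Complex

noncomputable def Sfun (R : ℝ) : ℂ → ℂ := dslope (fun z => Complex.sinh ((R:ℂ) * z)) 0

lemma sinhR_diff (R : ℝ) : Differentiable ℂ (fun z => Complex.sinh ((R:ℂ) * z)) :=
  Complex.differentiable_sinh.comp ((differentiable_id).const_mul _)

lemma Sfun_diff (R : ℝ) : Differentiable ℂ (Sfun R) := by
  intro w
  rcases eq_or_ne w 0 with rfl | hw
  · rcases ((sinhR_diff R).analyticAt (0:ℂ)) with ⟨p, hp⟩
    exact (HasFPowerSeriesAt.has_fpower_series_dslope_fslope hp).analyticAt.differentiableAt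
  · have heq := dslope_eventuallyEq_slope_of_ne (fun z => Complex.sinh ((R:ℂ) * z)) hw
    have hs : DifferentiableAt ℂ (slope (fun z => Complex.sinh ((R:ℂ) * z)) 0) w := by
      have : DifferentiableAt ℂ (fun z => (Complex.sinh ((R:ℂ) * z) - Complex.sinh ((R:ℂ)*0)) / (z - 0)) w := by
        apply DifferentiableAt.div
        · exact ((sinhR_diff R) w).sub_const _
        · fun_prop
        · simpa using hw
      exact this.congr_of_eventuallyEq (by filter_upwards with z; rw [slope_def_field])
    exact hs.congr_of_eventuallyEq heq

lemma Sfun_ne (R : ℝ) {w : ℂ} (hw : w ≠ 0) : Sfun R w = Complex.sinh ((R:ℂ) * w) / w := by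
  rw [Sfun, dslope_of_ne _ hw, slope_def_field]
  simp

lemma Sfun_zero (R : ℝ) : Sfun R 0 = R := by
  rw [Sfun, dslope_same]
  have : HasDerivAt (fun z => Complex.sinh ((R:ℂ) * z)) ((Complex.cosh ((R:ℂ)*0)) * R) 0 :=
    (Complex.hasDerivAt_sinh ((R:ℂ)*0)).comp 0 (by simpa using (hasDerivAt_id (0:ℂ)).const_mul (R:ℂ))
  simpa using this.deriv

/-- For `R > 0`, the closed-form Selberg transform extends to an entire function `g`
with `g(0) = 4π(R cosh R − sinh R)` and `g(±i) = π(sinh(2R) − 2R)`. -/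
theorem selberg_transform_entire_extension (R : ℝ) (hR : 0 < R) :
    ∃ g : ℂ → ℂ, Differentiable ℂ g ∧
      (∀ r : ℂ, r ≠ 0 → r ≠ Complex.I → r ≠ -Complex.I →
        g r = 2 * (Real.pi : ℂ) * Complex.sinh ((R : ℂ) * (1 + Complex.I * r)) /
                (Complex.I * r * (1 + Complex.I * r))
              - 2 * (Real.pi : ℂ) * Complex.sinh ((R : ℂ) * (1 - Complex.I * r)) /
                (Complex.I * r * (1 - Complex.I * r))) ∧
      g 0 = ((4 * Real.pi * (R * Real.cosh R - Real.sinh R) : ℝ) : ℂ) ∧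
      g Complex.I = ((Real.pi * (Real.sinh (2 * R) - 2 * R) : ℝ) : ℂ) ∧
      g (-Complex.I) = ((Real.pi * (Real.sinh (2 * R) - 2 * R) : ℝ) : ℂ) := by
  refine ⟨fun r => 2 * (Real.pi : ℂ) * (2 * Complex.cosh R * Sfun R (Complex.I * r)
      - Sfun R (1 + Complex.I * r) - Sfun R (1 - Complex.I * r)), ?_, ?_, ?_, ?_, ?_⟩
  · apply Differentiable.const_mul
    apply Differentiable.sub
    apply Differentiable.sub
    · exact Differentiable.const_mul ((Sfun_diff R).comp ((differentiable_id).const_mul _)) _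
    · exact (Sfun_diff R).comp (by fun_prop)
    · exact (Sfun_diff R).comp (by fun_prop)
  · intro r hr0 hrI hrI'
    have h1 : Complex.I * r ≠ 0 := by simp [hr0]
    have h2 : (1 : ℂ) + Complex.I * r ≠ 0 := by
      intro h
      have h' : Complex.I * r = -1 := by linear_combination h
      exact hrI (by linear_combination (-Complex.I) * h' + r * Complex.I_mul_I)
    have h3 : (1 : ℂ) - Complex.I * r ≠ 0 := by
      intro h
      have h' : Complex.I * r = 1 := by linear_combination -h
      exact hrI' (by linear_combination (-Complex.I) * h' + r * Complex.I_mul_I)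
    simp only [Sfun_ne R h1, Sfun_ne R h2, Sfun_ne R h3]
    have e1 : Complex.sinh ((R:ℂ) * (1 + Complex.I * r))
        = Complex.sinh R * Complex.cosh ((R:ℂ) * (Complex.I * r))
          + Complex.cosh R * Complex.sinh ((R:ℂ) * (Complex.I * r)) := by
      rw [mul_add, mul_one, Complex.sinh_add]
    have e2 : Complex.sinh ((R:ℂ) * (1 - Complex.I * r))
        = Complex.sinh R * Complex.cosh ((R:ℂ) * (Complex.I * r))
          - Complex.cosh R * Complex.sinh ((R:ℂ) * (Complex.I * r)) := by
      rw [mul_sub, mul_one, Complex.sinh_sub]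
    rw [e1, e2]
    field_simp
    ring
  · simp only [mul_zero, Sfun_zero, add_zero, sub_zero, mul_one]
    rw [Sfun_ne R one_ne_zero]
    push_cast [Complex.ofReal_cosh, Complex.ofReal_sinh]
    field_simp
    ring
  · have hI : Complex.I * Complex.I = -1 := Complex.I_mul_I
    simp only [hI]
    rw [show (1 : ℂ) + (-1 : ℂ) = 0 by ring, show (1 : ℂ) - (-1 : ℂ) = 2 by ring]
    rw [Sfun_zero, Sfun_ne R (by norm_num : (-1:ℂ) ≠ 0), Sfun_ne R (by norm_num : (2:ℂ) ≠ 0)]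
    push_cast [Complex.ofReal_cosh, Complex.ofReal_sinh]
    rw [show (R:ℂ) * (-1) = -R by ring, Complex.sinh_neg,
        show Complex.sinh ((R:ℂ)*2) = Complex.sinh (2*R) by rw [mul_comm]]
    rw [Complex.sinh_two_mul]
    ring
  · have hI : Complex.I * -Complex.I = 1 := by
      rw [mul_neg, Complex.I_mul_I]; ring
    simp only [hI]
    rw [show (1 : ℂ) + (1 : ℂ) = 2 by ring, show (1 : ℂ) - (1 : ℂ) = 0 by ring]
    rw [Sfun_zero, Sfun_ne R (by norm_num : (2:ℂ) ≠ 0), Sfun_ne R one_ne_zero]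
    push_cast [Complex.ofReal_cosh, Complex.ofReal_sinh]
    rw [show (R:ℂ) * 2 = 2*R by ring, Complex.sinh_two_mul]
    ring
end
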